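/- Suppose α ∈ (0,1) and let W be the top-left n×n block of P²(I_{n+k} − αP)⁻¹. Then W is symmetric (W = Wᵀ) and entrywise nonnegative (W ≥ 0). -/

import Mathlib

open Matrix

attribute [local instance] Matrix.linftyOpNormedAddCommGroup Matrix.linftyOpNormedRing
  Matrix.linftyOpNormedSpace

section Aux

variable {N : Type*} [Fintype N] [DecidableEq N]

/-- entry evaluation as a continuous linear map w.r.t. the linfty operator norm -/
noncomputable def entryCLM (x y : N) : Matrix N N ℝ →L[ℝ] ℝ :=
  LinearMap.mkContinuous
    { toFun := fun A => A x y
      map_add' := fun _ _ => rfl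
      map_smul' := fun _ _ => rfl } 1
    (by
      intro A
      rw [one_mul]
      have h1 : ‖A x y‖₊ ≤ ∑ j, ‖A x j‖₊ :=
        Finset.single_le_sum (f := fun j => ‖A x j‖₊) (fun j _ => zero_le)
          (Finset.mem_univ y)
      have h2 : (∑ j, ‖A x j‖₊) ≤ ‖A‖₊ := by
        rw [Matrix.linfty_opNNNorm_def]
        exact Finset.le_sup (f := fun i => ∑ j, ‖A i j‖₊) (Finset.mem_univ x)
      exact_mod_cast h1.trans h2)

lemma entry_nonneg_pow {T : Matrix N N ℝ} (hT : ∀ x y, 0 ≤ T x y) (m : ℕ) :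
    ∀ x y, 0 ≤ (T ^ m) x y := by
  induction m with
  | zero =>
    intro x y
    simp only [pow_zero, Matrix.one_apply]
    split <;> norm_num
  | succ m ih =>
    intro x y
    rw [pow_succ, Matrix.mul_apply]
    exact Finset.sum_nonneg fun z _ => mul_nonneg (ih x z) (hT z y)

lemma inv_entry_nonneg {T : Matrix N N ℝ} (hT : ∀ x y, 0 ≤ T x y)
    (hTn : ‖T‖ < 1) : ∀ x y, 0 ≤ (1 - T)⁻¹ x y := by
  haveI : CompleteSpace (Matrix N N ℝ) :=
    FiniteDimensional.complete ℝ (Matrix N N ℝ)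
  intro x y
  have hgeo : HasSum (fun m : ℕ => T ^ m) (Ring.inverse (1 - T)) :=
    hasSum_geom_series_inverse T hTn
  have hgeo' : HasSum (fun m : ℕ => (T ^ m) x y) ((1 - T)⁻¹ x y) := by
    rw [Matrix.nonsing_inv_eq_ringInverse]
    exact (entryCLM x y).hasSum hgeo
  rw [← hgeo'.tsum_eq]
  exact tsum_nonneg fun m => entry_nonneg_pow hT m x y

end Aux

/-- For `α ∈ (0,1)`, the top-left `n × n` block `W` of `P²(I - αP)⁻¹` is
symmetric and entrywise nonnegative. -/
theorem W_symm_nonneg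
    (n k : ℕ) (hn : 0 < n) (hk : 0 < k)
    (Z : Matrix (Fin n) (Fin k) ℝ)
    (hZpos : ∀ i s, 0 < Z i s)
    (hZrow : ∀ i, ∑ s, Z i s = 1)
    (G : Matrix (Fin k) (Fin k) ℝ)
    (hGsym : Gᵀ = G)
    (hG01 : ∀ r s, G r s = 0 ∨ G r s = 1)
    (hGdiag : ∀ r, G r r = 0)
    (η : ℝ) (hη : 0 < η)
    (Q : Matrix (Fin n ⊕ Fin k) (Fin n ⊕ Fin k) ℝ)
    (hQ : Q = Matrix.fromBlocks 0 Z Zᵀ (η • G))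
    (E : Matrix (Fin k) (Fin k) ℝ)
    (hE : E = Matrix.diagonal (fun s => (∑ i, Z i s) + η * ∑ r, G s r))
    (Γ : Matrix (Fin n ⊕ Fin k) (Fin n ⊕ Fin k) ℝ)
    (hΓ : Γ = Matrix.fromBlocks 1 0 0 E)
    (P : Matrix (Fin n ⊕ Fin k) (Fin n ⊕ Fin k) ℝ)
    (hP : P = Γ⁻¹ * Q)
    (α : ℝ) (hα : α ∈ Set.Ioo (0 : ℝ) 1)
    (hinv : IsUnit (1 - α • P))
    (W : Matrix (Fin n) (Fin n) ℝ)
    (hW : W = (P ^ 2 * (1 - α • P)⁻¹).toBlocks₁₁) :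
    Wᵀ = W ∧ ∀ i j, 0 ≤ W i j := by
  haveI : Nonempty (Fin n) := ⟨⟨0, hn⟩⟩
  obtain ⟨hα0, hα1⟩ := hα
  set d : Fin n ⊕ Fin k → ℝ :=
    Sum.elim (fun _ => 1) (fun s => (∑ i, Z i s) + η * ∑ r, G s r) with hd
  -- positivity of G entries
  have hGnn : ∀ r s, 0 ≤ G r s := by
    intro r s; rcases hG01 r s with h | h <;> rw [h] <;> norm_num
  have hdpos : ∀ x, 0 < d x := by
    rintro (i | s)
    · exact one_pos
    · simp only [hd, Sum.elim_inr]
      have h1 : 0 < ∑ i, Z i s := Finset.sum_pos (fun i _ => hZpos i s) Finset.univ_nonempty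
      have h2 : 0 ≤ η * ∑ r, G s r :=
        mul_nonneg hη.le (Finset.sum_nonneg fun r _ => hGnn s r)
      linarith
  -- Γ is the diagonal matrix of d
  have hΓd : Γ = Matrix.diagonal d := by
    rw [hΓ, hE, hd, ← Matrix.diagonal_one, Matrix.fromBlocks_diagonal]
  have hΓinv : Γ⁻¹ = Matrix.diagonal fun x => (d x)⁻¹ := by
    apply Matrix.inv_eq_right_inv
    rw [hΓd, Matrix.diagonal_mul_diagonal]
    have : (fun x => d x * (d x)⁻¹) = fun _ => (1 : ℝ) := by
      funext x; exact mul_inv_cancel₀ (hdpos x).ne'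
    rw [this, Matrix.diagonal_one]
  have hPd : P = Matrix.diagonal (fun x => (d x)⁻¹) * Q := by rw [hP, hΓinv]
  -- entrywise facts about Q
  have hQnn : ∀ x y, 0 ≤ Q x y := by
    rintro (i | r) (j | s) <;>
      simp only [hQ, Matrix.fromBlocks_apply₁₁, Matrix.fromBlocks_apply₁₂,
        Matrix.fromBlocks_apply₂₁, Matrix.fromBlocks_apply₂₂, Matrix.zero_apply,
        Matrix.transpose_apply, Matrix.smul_apply, smul_eq_mul]
    · exact le_refl 0
    · exact (hZpos i s).le
    · exact (hZpos j r).le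
    · exact mul_nonneg hη.le (hGnn r s)
  have hQsym : Qᵀ = Q := by
    rw [hQ, Matrix.fromBlocks_transpose, Matrix.transpose_zero, Matrix.transpose_transpose,
      Matrix.transpose_smul, hGsym]
  have hQrow : ∀ x, ∑ y, Q x y = d x := by
    rintro (i | s) <;>
      rw [Fintype.sum_sum_type] <;>
      simp only [hQ, hd, Matrix.fromBlocks_apply₁₁, Matrix.fromBlocks_apply₁₂,
        Matrix.fromBlocks_apply₂₁, Matrix.fromBlocks_apply₂₂, Matrix.zero_apply,
        Matrix.transpose_apply, Matrix.smul_apply, smul_eq_mul, Sum.elim_inl, Sum.elim_inr]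
    · rw [Finset.sum_const_zero, zero_add, hZrow]
    · rw [← Finset.mul_sum]
  -- entrywise facts about P
  have hPapp : ∀ x y, P x y = (d x)⁻¹ * Q x y := by
    intro x y; rw [hPd, Matrix.diagonal_mul]
  have hPnn : ∀ x y, 0 ≤ P x y := fun x y => by
    rw [hPapp]; exact mul_nonneg (inv_nonneg.2 (hdpos x).le) (hQnn x y)
  have hProw : ∀ x, ∑ y, P x y = 1 := by
    intro x
    simp only [hPapp]
    rw [← Finset.mul_sum, hQrow, inv_mul_cancel₀ (hdpos x).ne']
  -- D * P = Pᵀ * D  where D = diagonal d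
  set D : Matrix (Fin n ⊕ Fin k) (Fin n ⊕ Fin k) ℝ := Matrix.diagonal d with hD
  have hDP : D * P = Q := by
    rw [hPd, hD, ← Matrix.mul_assoc, Matrix.diagonal_mul_diagonal]
    have : (fun x => d x * (d x)⁻¹) = fun _ => (1 : ℝ) := by
      funext x; exact mul_inv_cancel₀ (hdpos x).ne'
    rw [this, Matrix.diagonal_one, Matrix.one_mul]
  have hDPsym : D * P = Pᵀ * D := by
    have h1 : (D * P)ᵀ = Pᵀ * D := by
      rw [Matrix.transpose_mul, hD, Matrix.diagonal_transpose]
    rw [hDP, ← h1, hDP, hQsym]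
  -- the resolvent
  set A : Matrix (Fin n ⊕ Fin k) (Fin n ⊕ Fin k) ℝ := 1 - α • P with hA
  set B : Matrix (Fin n ⊕ Fin k) (Fin n ⊕ Fin k) ℝ := A⁻¹ with hB
  have hAdet : IsUnit A.det := (Matrix.isUnit_iff_isUnit_det A).mp hinv
  have hAB : A * B = 1 := Matrix.mul_nonsing_inv A hAdet
  have hBA : B * A = 1 := Matrix.nonsing_inv_mul A hAdet
  have hDAsym : D * A = Aᵀ * D := by
    rw [hA, Matrix.transpose_sub, Matrix.transpose_one, Matrix.transpose_smul,
      Matrix.mul_sub, Matrix.sub_mul, Matrix.mul_one, Matrix.one_mul,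
      Matrix.mul_smul, Matrix.smul_mul, hDPsym]
  have hDB : D * B = Bᵀ * D := by
    have h1 : Bᵀ * (D * A) * B = Bᵀ * (Aᵀ * D) * B := by rw [hDAsym]
    have h2 : Bᵀ * (D * A) * B = Bᵀ * D := by
      rw [Matrix.mul_assoc, Matrix.mul_assoc, hAB, Matrix.mul_one]
    have h3 : Bᵀ * (Aᵀ * D) * B = D * B := by
      rw [← Matrix.mul_assoc, ← Matrix.transpose_mul, hAB,
        Matrix.transpose_one, Matrix.one_mul]
    rw [← h2, h1, h3]
  -- P commutes with B
  have hPA : P * A = A * P := by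
    rw [hA, Matrix.mul_sub, Matrix.sub_mul, Matrix.mul_one, Matrix.one_mul,
      Matrix.mul_smul, Matrix.smul_mul]
  have hPB : B * P = P * B := by
    calc B * P = B * P * (A * B) := by rw [hAB, Matrix.mul_one]
      _ = B * (P * A) * B := by simp only [Matrix.mul_assoc]
      _ = B * (A * P) * B := by rw [hPA]
      _ = (B * A) * (P * B) := by simp only [Matrix.mul_assoc]
      _ = P * B := by rw [hBA, Matrix.one_mul]
  set M : Matrix (Fin n ⊕ Fin k) (Fin n ⊕ Fin k) ℝ := P ^ 2 * B with hM
  have hMcomm : B * P ^ 2 = M := by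
    rw [hM, pow_two, ← Matrix.mul_assoc, hPB, Matrix.mul_assoc, hPB, ← Matrix.mul_assoc]
  have hDM : D * M = Mᵀ * D := by
    have hM2 : M = P * (P * B) := by rw [hM, pow_two, Matrix.mul_assoc]
    have hM3 : M = B * (P * P) := by rw [← hMcomm, pow_two]
    have hMt : Mᵀ = Pᵀ * (Pᵀ * Bᵀ) := by
      rw [hM3, Matrix.transpose_mul, Matrix.transpose_mul, Matrix.mul_assoc]
    have hkey : D * (P * (P * B)) = Pᵀ * (Pᵀ * (Bᵀ * D)) := by
      rw [← Matrix.mul_assoc D P, hDPsym, Matrix.mul_assoc, ← Matrix.mul_assoc D P, hDPsym,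
        Matrix.mul_assoc, hDB]
    rw [hMt]
    rw [hM2] ; rw [hkey] ; simp only [Matrix.mul_assoc]
  -- symmetry of W
  have hWapp : ∀ i j, W i j = M (Sum.inl i) (Sum.inl j) := by
    intro i j; rw [hW, hM, hB, hA]; rfl
  have hMsym : ∀ i j, M (Sum.inl i) (Sum.inl j) = M (Sum.inl j) (Sum.inl i) := by
    intro i j
    have := congrFun (congrFun hDM (Sum.inl i)) (Sum.inl j)
    rw [hD, Matrix.diagonal_mul, Matrix.mul_diagonal] at this
    simpa [hd] using this
  -- norm bound : ‖α • P‖ < 1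
  have hPnorm : ‖P‖ ≤ 1 := by
    rw [Matrix.linfty_opNorm_def]
    have : ((Finset.univ : Finset (Fin n ⊕ Fin k)).sup fun x => ∑ y, ‖P x y‖₊) ≤ 1 := by
      apply Finset.sup_le
      intro x _
      rw [← NNReal.coe_le_coe, NNReal.coe_one, NNReal.coe_sum]
      simp only [coe_nnnorm, Real.norm_eq_abs]
      calc (∑ y, |P x y|) = ∑ y, P x y := by
            apply Finset.sum_congr rfl; intro y _; exact abs_of_nonneg (hPnn x y)
        _ ≤ 1 := le_of_eq (hProw x)
    exact_mod_cast this
  have hnormlt : ‖α • P‖ < 1 := by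
    rw [norm_smul, Real.norm_eq_abs, abs_of_pos hα0]
    calc α * ‖P‖ ≤ α * 1 := by
          apply mul_le_mul_of_nonneg_left hPnorm hα0.le
      _ < 1 := by rwa [mul_one]
  have hαPnn : ∀ x y, 0 ≤ (α • P) x y := fun x y => by
    rw [Matrix.smul_apply, smul_eq_mul]; exact mul_nonneg hα0.le (hPnn x y)
  have hBnn : ∀ x y, 0 ≤ B x y := by
    rw [hB, hA]
    exact inv_entry_nonneg hαPnn hnormlt
  refine ⟨?_, ?_⟩
  · funext i j
    rw [Matrix.transpose_apply, hWapp, hWapp, hMsym]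
  · intro i j
    rw [hWapp, hM, Matrix.mul_apply]
    refine Finset.sum_nonneg fun z _ => mul_nonneg ?_ (hBnn z (Sum.inl j))
    exact entry_nonneg_pow hPnn 2 (Sum.inl i) z
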